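/- (a) For all real t, x with sin(x−t) ≠ 0 and sin(x+t) ≠ 0 one has cot(x−t) − cot(x+t) = 2·sin(2t)/(cos(2t) − cos(2x)). (b) On the open set Ω = {(t,x) ∈ ℝ² : cos(2t) ≠ cos(2x) and sin(2t) ≠ 0}, the function u(t,x) = 2·sin(2t)/(cos(2t) − cos(2x)) is nonvanishing and satisfies the fast diffusion equation u_t = ∂/∂x (u_x / u). -/

import Mathlib

/-- Partial derivative with respect to the first variable (time). -/
noncomputable def pt (u : ℝ × ℝ → ℝ) (p : ℝ × ℝ) : ℝ :=
  deriv (fun s => u (s, p.2)) p.1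

/-- Partial derivative with respect to the second variable (space). -/
noncomputable def px (u : ℝ × ℝ → ℝ) (p : ℝ × ℝ) : ℝ :=
  deriv (fun y => u (p.1, y)) p.2

private lemma hd_den (c y : ℝ) :
    HasDerivAt (fun y : ℝ => c - Real.cos (2 * y)) (2 * Real.sin (2 * y)) y := by
  have h1 : HasDerivAt (fun y : ℝ => 2 * y) 2 y := by
    simpa using (hasDerivAt_id y).const_mul (2 : ℝ)
  have h2 : HasDerivAt (fun y : ℝ => Real.cos (2 * y)) (-Real.sin (2 * y) * 2) y :=
    (Real.hasDerivAt_cos (2 * y)).comp y h1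
  have := (hasDerivAt_const y c).sub h2
  exact this.congr_deriv (by ring)

private lemma hd_ux (t c y : ℝ) (h : c - Real.cos (2 * y) ≠ 0) :
    HasDerivAt (fun y : ℝ => 2 * Real.sin t / (c - Real.cos (2 * y)))
      (-(2 * Real.sin t) * (2 * Real.sin (2 * y)) / (c - Real.cos (2 * y)) ^ 2) y := by
  have := (hasDerivAt_const y (2 * Real.sin t)).div (hd_den c y) h
  exact this.congr_deriv (by ring)

theorem fast_diffusion_solution_cot
    (u : ℝ × ℝ → ℝ)
    (hu : u = fun p => 2 * Real.sin (2 * p.1) / (Real.cos (2 * p.1) - Real.cos (2 * p.2)))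
    (Ω : Set (ℝ × ℝ))
    (hΩ : Ω = {p : ℝ × ℝ | Real.cos (2 * p.1) ≠ Real.cos (2 * p.2) ∧
      Real.sin (2 * p.1) ≠ 0}) :
    (∀ t x : ℝ, Real.sin (x - t) ≠ 0 → Real.sin (x + t) ≠ 0 →
      Real.cot (x - t) - Real.cot (x + t) =
        2 * Real.sin (2 * t) / (Real.cos (2 * t) - Real.cos (2 * x))) ∧
    (∀ p ∈ Ω, u p ≠ 0 ∧ pt u p = px (fun q => px u q / u q) p) := by
  constructor
  · intro t x h1 h2
    have key : Real.cos (2 * t) - Real.cos (2 * x)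
        = 2 * Real.sin (x + t) * Real.sin (x - t) := by
      rw [Real.cos_sub_cos]
      rw [show (2 * t + 2 * x) / 2 = x + t by ring, show (2 * t - 2 * x) / 2 = -(x - t) by ring,
        Real.sin_neg]
      ring
    have hsin2t : Real.sin (2 * t)
        = Real.sin (x + t) * Real.cos (x - t) - Real.cos (x + t) * Real.sin (x - t) := by
      rw [show (2 : ℝ) * t = (x + t) - (x - t) by ring, Real.sin_sub]
    rw [Real.cot_eq_cos_div_sin, Real.cot_eq_cos_div_sin, key, hsin2t]
    field_simp
  · intro p hp
    rw [hΩ] at hp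
    obtain ⟨hD, hs⟩ := hp
    set t := p.1 with ht
    set x := p.2 with hx
    have hD' : Real.cos (2 * t) - Real.cos (2 * x) ≠ 0 := sub_ne_zero.mpr hD
    have hune : u p ≠ 0 := by
      rw [hu]
      exact div_ne_zero (mul_ne_zero two_ne_zero hs) hD'
    refine ⟨hune, ?_⟩
    -- time derivative
    have hdt : HasDerivAt (fun s => u (s, x))
        ((4 * Real.cos (2 * t) * (Real.cos (2 * t) - Real.cos (2 * x))
          + 4 * Real.sin (2 * t) ^ 2) / (Real.cos (2 * t) - Real.cos (2 * x)) ^ 2) t := by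
      rw [hu]
      have hmul : HasDerivAt (fun s : ℝ => 2 * s) 2 t := by
        simpa using (hasDerivAt_id t).const_mul (2 : ℝ)
      have hN : HasDerivAt (fun s : ℝ => 2 * Real.sin (2 * s)) (4 * Real.cos (2 * t)) t := by
        have := ((Real.hasDerivAt_sin (2 * t)).comp t hmul).const_mul (2 : ℝ)
        simpa using this.congr_deriv (by ring)
      have hDd : HasDerivAt (fun s : ℝ => Real.cos (2 * s) - Real.cos (2 * x))
          (-2 * Real.sin (2 * t)) t := by
        have := ((Real.hasDerivAt_cos (2 * t)).comp t hmul).sub_const (Real.cos (2 * x))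
        simpa using this.congr_deriv (by ring)
      have := hN.div hDd hD'
      exact this.congr_deriv (by ring)
    have hpt : pt u p = (4 * Real.cos (2 * t) * (Real.cos (2 * t) - Real.cos (2 * x))
        + 4 * Real.sin (2 * t) ^ 2) / (Real.cos (2 * t) - Real.cos (2 * x)) ^ 2 := by
      unfold pt
      exact hdt.deriv
    -- spatial side
    have hopen : IsOpen {y : ℝ | Real.cos (2 * t) - Real.cos (2 * y) ≠ 0} := by
      have hc : Continuous fun y : ℝ => Real.cos (2 * t) - Real.cos (2 * y) := by
        continuity
      exact isOpen_ne.preimage hc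
    have hxmem : x ∈ {y : ℝ | Real.cos (2 * t) - Real.cos (2 * y) ≠ 0} := hD'
    have heq : (fun y => px u (t, y) / u (t, y))
        =ᶠ[nhds x] (fun y => -2 * Real.sin (2 * y) / (Real.cos (2 * t) - Real.cos (2 * y))) := by
      filter_upwards [hopen.mem_nhds hxmem] with y hy
      have hy' : Real.cos (2 * t) - Real.cos (2 * y) ≠ 0 := hy
      have hpx : px u (t, y) = -(2 * Real.sin (2 * t)) * (2 * Real.sin (2 * y))
          / (Real.cos (2 * t) - Real.cos (2 * y)) ^ 2 := by
        unfold px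
        rw [hu]
        exact (hd_ux (2 * t) (Real.cos (2 * t)) y hy').deriv
      have huy : u (t, y) = 2 * Real.sin (2 * t) / (Real.cos (2 * t) - Real.cos (2 * y)) := by
        rw [hu]
      rw [hpx, huy]
      field_simp
    have hg : HasDerivAt (fun y => -2 * Real.sin (2 * y) / (Real.cos (2 * t) - Real.cos (2 * y)))
        ((-4 * Real.cos (2 * x) * (Real.cos (2 * t) - Real.cos (2 * x))
          + 4 * Real.sin (2 * x) ^ 2) / (Real.cos (2 * t) - Real.cos (2 * x)) ^ 2) x := by
      have hmul : HasDerivAt (fun y : ℝ => 2 * y) 2 x := by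
        simpa using (hasDerivAt_id x).const_mul (2 : ℝ)
      have hN : HasDerivAt (fun y : ℝ => -2 * Real.sin (2 * y)) (-4 * Real.cos (2 * x)) x := by
        have := ((Real.hasDerivAt_sin (2 * x)).comp x hmul).const_mul (-2 : ℝ)
        simpa using this.congr_deriv (by ring)
      have := hN.div (hd_den (Real.cos (2 * t)) x) hD'
      exact this.congr_deriv (by ring)
    have hpx2 : px (fun q => px u q / u q) p
        = (-4 * Real.cos (2 * x) * (Real.cos (2 * t) - Real.cos (2 * x))
          + 4 * Real.sin (2 * x) ^ 2) / (Real.cos (2 * t) - Real.cos (2 * x)) ^ 2 := by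
      have hrfl : px (fun q => px u q / u q) p
          = deriv (fun y => px u (t, y) / u (t, y)) x := rfl
      rw [hrfl, heq.deriv_eq]
      exact hg.deriv
    rw [hpt, hpx2]
    congr 1
    nlinarith [Real.sin_sq_add_cos_sq (2 * t), Real.sin_sq_add_cos_sq (2 * x)]
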